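/- arXiv:2002.12015 — 3 statements merged into one kernel-verified Lean document; each statement's English description precedes it below -/
import Mathlib

section
/- Let a>0, s>1/2 with s−1/2 ∉ ℕ, m = ⌊s−1/2⌋, and let g : ℝ → ℂ be measurable, vanishing outside [-a,a], with ∫_{-a}^{a} |g(ξ)|²|ξ|^{2s} dξ < ∞. Then for every z ∈ ℂ the integral f(z) = (2π)^{-1/2} ∫_{-a}^{a} g(ξ)(e^{izξ} − P_m(izξ)) dξ converges absolutely, f is entire, and there is a constant C>0 depending only on a and s such that |f(z)| ≤ C |z|^{m+1} e^{a|z|} (∫_{-a}^{a} |g(ξ)|²|ξ|^{2s} dξ)^{1/2} for all z ∈ ℂ. In particular f is of exponential type a. -/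
open MeasureTheory Complex Filter Topology

noncomputable section

/-- `f` is an entire function of exponential type `a`. -/
def ExpType (a : ℝ) (f : ℂ → ℂ) : Prop :=
  ∀ ε > (0 : ℝ), ∃ C > (0 : ℝ), ∀ z : ℂ, ‖f z‖ ≤ C * Real.exp ((a + ε) * ‖z‖)

lemma exp_tail_bound (n : ℕ) (w : ℂ) :
    ‖Complex.exp w - ∑ j ∈ Finset.range n, w ^ j / (j.factorial : ℂ)‖
      ≤ ‖w‖ ^ n * Real.exp ‖w‖ := by
  have hsum : Summable (fun j : ℕ => w ^ j / (j.factorial : ℂ)) := by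
    apply Summable.of_norm
    simpa [norm_div, norm_pow, Complex.norm_natCast] using Real.summable_pow_div_factorial ‖w‖
  have hexp : Complex.exp w = ∑' j : ℕ, w ^ j / (j.factorial : ℂ) := by
    rw [Complex.exp_eq_exp_ℂ, NormedSpace.exp_eq_tsum_div]
  have htail : Complex.exp w - ∑ j ∈ Finset.range n, w ^ j / (j.factorial : ℂ)
      = ∑' k : ℕ, w ^ (k + n) / ((k + n).factorial : ℂ) := by
    rw [hexp, sub_eq_iff_eq_add']
    exact (hsum.sum_add_tsum_nat_add n).symm
  rw [htail]
  have hb : ∀ k : ℕ, ‖w ^ (k + n) / ((k + n).factorial : ℂ)‖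
      ≤ ‖w‖ ^ n * (‖w‖ ^ k / k.factorial) := by
    intro k
    rw [norm_div, norm_pow, Complex.norm_natCast, pow_add, mul_comm (‖w‖ ^ k)]
    rw [mul_div_assoc]
    gcongr
    exact Nat.le_add_right k n
  calc ‖∑' k : ℕ, w ^ (k + n) / ((k + n).factorial : ℂ)‖
      ≤ ∑' k : ℕ, ‖w‖ ^ n * (‖w‖ ^ k / k.factorial) := by
        apply tsum_of_norm_bounded _ hb
        exact Summable.hasSum ((Real.summable_pow_div_factorial ‖w‖).mul_left _)
    _ = ‖w‖ ^ n * Real.exp ‖w‖ := by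
        rw [tsum_mul_left, Real.exp_eq_exp_ℝ, NormedSpace.exp_eq_tsum_div]

lemma partial_sum_hasDerivAt (n : ℕ) (w : ℂ) :
    HasDerivAt (fun w : ℂ => ∑ j ∈ Finset.range (n + 1), w ^ j / (j.factorial : ℂ))
      (∑ j ∈ Finset.range n, w ^ j / (j.factorial : ℂ)) w := by
  induction n with
  | zero => simpa using (hasDerivAt_const w (1 : ℂ))
  | succ n ih =>
    have h1 : HasDerivAt (fun w : ℂ => w ^ (n + 1) / ((n + 1).factorial : ℂ))
        (w ^ n / (n.factorial : ℂ)) w := by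
      have := (hasDerivAt_pow (n + 1) w).div_const ((n + 1).factorial : ℂ)
      convert! this using 1
      have hfac : ((n + 1).factorial : ℂ) = (n + 1) * (n.factorial : ℂ) := by
        push_cast [Nat.factorial_succ]; ring
      rw [hfac]
      have h1 : ((n : ℂ) + 1) ≠ 0 := Nat.cast_add_one_ne_zero n
      have h2 : (n.factorial : ℂ) ≠ 0 := by exact_mod_cast Nat.cast_ne_zero.2 n.factorial_ne_zero
      field_simp
      push_cast [Nat.add_sub_cancel_left]
      ring
    have := ih.add h1
    convert! this using 1
    · funext w
      rw [Finset.sum_range_succ]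
      rfl
    · rw [Finset.sum_range_succ]

lemma tail_hasDerivAt (n : ℕ) (w : ℂ) :
    HasDerivAt (fun w : ℂ => Complex.exp w - ∑ j ∈ Finset.range (n + 1), w ^ j / (j.factorial : ℂ))
      (Complex.exp w - ∑ j ∈ Finset.range n, w ^ j / (j.factorial : ℂ)) w :=
  (Complex.hasDerivAt_exp w).sub (partial_sum_hasDerivAt n w)

lemma abs_rpow_integrableOn {t : ℝ} (ht : -1 < t) {a : ℝ} (ha : 0 < a) :
    IntegrableOn (fun x : ℝ => |x| ^ t) (Set.Icc (-a) a) := by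
  have h0a : IntervalIntegrable (fun x : ℝ => |x| ^ t) volume 0 a := by
    rw [intervalIntegrable_iff_integrableOn_Ioo_of_le ha.le]
    refine ((intervalIntegral.integrableOn_Ioo_rpow_iff ha).2 ht).congr_fun
      (fun x hx => ?_) measurableSet_Ioo
    rw [abs_of_pos hx.1]
  have hneg : IntervalIntegrable (fun x : ℝ => |x| ^ t) volume (-a) 0 := by
    have := (IntervalIntegrable.iff_comp_neg (f := fun x : ℝ => |x| ^ t)
      (a := a) (b := 0)).1 h0a.symm
    simpa [abs_neg] using this
  have := hneg.trans h0a
  rwa [intervalIntegrable_iff_integrableOn_Icc_of_le (by linarith)] at this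

theorem stmt3 (a s : ℝ) (m : ℕ) (ha : 0 < a) (hs : 1 / 2 < s)
    (hsnotnat : ∀ n : ℕ, s - 1 / 2 ≠ n) (hm : m = Nat.floor (s - 1 / 2)) :
    ∃ C > (0 : ℝ), ∀ (g : ℝ → ℂ) (f : ℂ → ℂ),
      Measurable g →
      (∀ ξ : ℝ, ξ ∉ Set.Icc (-a) a → g ξ = 0) →
      Integrable (fun ξ : ℝ => ‖g ξ‖ ^ 2 * |ξ| ^ (2 * s)) →
      (∀ z : ℂ, f z =
        (((2 * Real.pi) ^ (-(1 / 2) : ℝ) : ℝ) : ℂ) *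
          ∫ ξ : ℝ, g ξ * (Complex.exp (Complex.I * z * ξ) -
            ∑ j ∈ Finset.range (m + 1), (Complex.I * z * ξ) ^ j / (j.factorial : ℂ))) →
      (∀ z : ℂ, Integrable (fun ξ : ℝ => g ξ * (Complex.exp (Complex.I * z * ξ) -
          ∑ j ∈ Finset.range (m + 1), (Complex.I * z * ξ) ^ j / (j.factorial : ℂ)))) ∧
      Differentiable ℂ f ∧
      (∀ z : ℂ, ‖f z‖ ≤
          C * ‖z‖ ^ (m + 1) * Real.exp (a * ‖z‖) *
            Real.sqrt (∫ ξ : ℝ, ‖g ξ‖ ^ 2 * |ξ| ^ (2 * s))) ∧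
      ExpType a f := by
  -- basic exponent facts
  have hmlt : s - 1 / 2 < (m : ℝ) + 1 := by
    rw [hm]
    exact_mod_cast Nat.lt_floor_add_one (s - 1 / 2)
  set t : ℝ := 2 * ((m : ℝ) + 1 - s) with ht_def
  have ht : -1 < t := by simp only [ht_def]; linarith
  have hKint : IntegrableOn (fun x : ℝ => |x| ^ t) (Set.Icc (-a) a) :=
    abs_rpow_integrableOn ht ha
  set K : ℝ := ∫ ξ in Set.Icc (-a) a, |ξ| ^ t with hK_def
  have hK0 : 0 ≤ K := setIntegral_nonneg measurableSet_Icc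
    (fun x _ => Real.rpow_nonneg (abs_nonneg x) t)
  set r : ℝ := (2 * Real.pi) ^ (-(1 / 2) : ℝ) with hr_def
  have hr0 : 0 < r := Real.rpow_pos_of_pos (by positivity) _
  set C : ℝ := max 1 (r * Real.sqrt K) with hC_def
  have hC1 : (1 : ℝ) ≤ C := le_max_left _ _
  have hC0 : 0 < C := lt_of_lt_of_le one_pos hC1
  have hCge : r * Real.sqrt K ≤ C := le_max_right _ _
  refine ⟨C, hC0, ?_⟩
  intro g f hgmeas hgsupp hgint hf
  -- the L² functions u, v
  set u : ℝ → ℝ := fun ξ => ‖g ξ‖ * |ξ| ^ s with hu_def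
  set v : ℝ → ℝ := (Set.Icc (-a) a).indicator (fun ξ => |ξ| ^ ((m : ℝ) + 1 - s)) with hv_def
  have hu_meas : Measurable u := (hgmeas.norm).mul (measurable_id.abs.pow_const s)
  have hv_meas : Measurable v :=
    Measurable.indicator (measurable_id.abs.pow_const _) measurableSet_Icc
  have hu_nonneg : ∀ ξ, 0 ≤ u ξ := fun ξ =>
    mul_nonneg (norm_nonneg _) (Real.rpow_nonneg (abs_nonneg _) _)
  have hv_nonneg : ∀ ξ, 0 ≤ v ξ := fun ξ =>
    Set.indicator_nonneg (fun x _ => Real.rpow_nonneg (abs_nonneg _) _) ξ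
  have husq_eq : ∀ ξ, u ξ ^ 2 = ‖g ξ‖ ^ 2 * |ξ| ^ (2 * s) := by
    intro ξ
    rw [hu_def]
    rw [mul_pow, ← Real.rpow_natCast (|ξ| ^ s) 2, ← Real.rpow_mul (abs_nonneg ξ)]
    norm_num [mul_comm s 2]
  have husq : Integrable (fun ξ => u ξ ^ 2) := by
    refine hgint.congr (ae_of_all _ fun ξ => ?_)
    exact (husq_eq ξ).symm
  have hvsq_eq : ∀ ξ, v ξ ^ 2 = (Set.Icc (-a) a).indicator (fun x => |x| ^ t) ξ := by
    intro ξ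
    rw [hv_def]
    by_cases hξ : ξ ∈ Set.Icc (-a) a
    · rw [Set.indicator_of_mem hξ, Set.indicator_of_mem hξ,
        ← Real.rpow_natCast (|ξ| ^ _) 2, ← Real.rpow_mul (abs_nonneg ξ)]
      norm_num [ht_def, mul_comm]
    · rw [Set.indicator_of_notMem hξ, Set.indicator_of_notMem hξ]
      norm_num
  have hvsq : Integrable (fun ξ => v ξ ^ 2) := by
    have : Integrable ((Set.Icc (-a) a).indicator (fun x : ℝ => |x| ^ t)) := by
      rwa [integrable_indicator_iff measurableSet_Icc]
    exact this.congr (ae_of_all _ fun ξ => (hvsq_eq ξ).symm)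
  -- the product u * v is integrable
  have hIuv : Integrable (fun ξ => u ξ * v ξ) := by
    refine Integrable.mono' ((husq.add hvsq).div_const 2)
      ((hu_meas.mul hv_meas).aestronglyMeasurable) (ae_of_all _ fun ξ => ?_)
    rw [Real.norm_of_nonneg (mul_nonneg (hu_nonneg ξ) (hv_nonneg ξ))]
    simp only [Pi.add_apply]
    nlinarith [sq_nonneg (u ξ - v ξ), hu_nonneg ξ, hv_nonneg ξ]
  -- key identity: u * v = ‖g‖ * |ξ|^(m+1)
  have huv : ∀ ξ, u ξ * v ξ = ‖g ξ‖ * |ξ| ^ (m + 1 : ℕ) := by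
    intro ξ
    by_cases hξ : ξ ∈ Set.Icc (-a) a
    · rw [hu_def, hv_def, Set.indicator_of_mem hξ]
      rw [mul_assoc, ← Real.rpow_add' (abs_nonneg ξ) (by intro h; simp at h; linarith)]
      rw [← Real.rpow_natCast |ξ| (m + 1)]
      norm_num
    · rw [hv_def, Set.indicator_of_notMem hξ, hgsupp ξ hξ]
      simp
  -- Hölder
  have hG0 : 0 ≤ ∫ ξ : ℝ, ‖g ξ‖ ^ 2 * |ξ| ^ (2 * s) :=
    integral_nonneg fun ξ => mul_nonneg (by positivity) (Real.rpow_nonneg (abs_nonneg _) _)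
  have hHolder : ∫ ξ, u ξ * v ξ
      ≤ Real.sqrt (∫ ξ : ℝ, ‖g ξ‖ ^ 2 * |ξ| ^ (2 * s)) * Real.sqrt K := by
    have hpq : Real.HolderConjugate 2 2 := Real.HolderConjugate.two_two
    have hu2 : MemLp u (ENNReal.ofReal 2) volume := by
      rw [show ENNReal.ofReal 2 = 2 by norm_num]
      exact (memLp_two_iff_integrable_sq hu_meas.aestronglyMeasurable).2 husq
    have hv2 : MemLp v (ENNReal.ofReal 2) volume := by
      rw [show ENNReal.ofReal 2 = 2 by norm_num]
      exact (memLp_two_iff_integrable_sq hv_meas.aestronglyMeasurable).2 hvsq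
    have := integral_mul_le_Lp_mul_Lq_of_nonneg hpq (ae_of_all _ hu_nonneg)
      (ae_of_all _ hv_nonneg) hu2 hv2
    calc ∫ ξ, u ξ * v ξ
        ≤ (∫ ξ, u ξ ^ (2 : ℝ)) ^ ((1 : ℝ) / 2) * (∫ ξ, v ξ ^ (2 : ℝ)) ^ ((1 : ℝ) / 2) := this
      _ = Real.sqrt (∫ ξ : ℝ, ‖g ξ‖ ^ 2 * |ξ| ^ (2 * s)) * Real.sqrt K := by
          rw [← Real.sqrt_eq_rpow, ← Real.sqrt_eq_rpow]
          congr 1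
          · congr 1
            refine integral_congr_ae (ae_of_all _ fun ξ => ?_)
            show u ξ ^ (2 : ℝ) = ‖g ξ‖ ^ 2 * |ξ| ^ (2 * s)
            rw [show (2 : ℝ) = ((2 : ℕ) : ℝ) by norm_num, Real.rpow_natCast]
            exact husq_eq ξ
          · congr 1
            rw [hK_def, ← integral_indicator measurableSet_Icc]
            refine integral_congr_ae (ae_of_all _ fun ξ => ?_)
            show v ξ ^ (2 : ℝ) = (Set.Icc (-a) a).indicator (fun x => |x| ^ t) ξ
            rw [show (2 : ℝ) = ((2 : ℕ) : ℝ) by norm_num, Real.rpow_natCast]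
            exact hvsq_eq ξ
  -- norm of I*z*ξ
  have hwnorm : ∀ (z : ℂ) (ξ : ℝ), ‖Complex.I * z * (ξ : ℂ)‖ = ‖z‖ * |ξ| := by
    intro z ξ
    rw [norm_mul, norm_mul, Complex.norm_I, one_mul, Complex.norm_real, Real.norm_eq_abs]
  -- pointwise bound for the integrand
  have hptb : ∀ (z : ℂ) (ξ : ℝ),
      ‖g ξ * (Complex.exp (Complex.I * z * ξ) -
          ∑ j ∈ Finset.range (m + 1), (Complex.I * z * ξ) ^ j / (j.factorial : ℂ))‖
        ≤ u ξ * v ξ * (‖z‖ ^ (m + 1) * Real.exp (a * ‖z‖)) := by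
    intro z ξ
    by_cases hξ : ξ ∈ Set.Icc (-a) a
    · have hξa : |ξ| ≤ a := abs_le.2 ⟨hξ.1, hξ.2⟩
      rw [norm_mul, huv ξ]
      have h1 := exp_tail_bound (m + 1) (Complex.I * z * ξ)
      rw [hwnorm z ξ] at h1
      have h2 : (‖z‖ * |ξ|) ^ (m + 1) * Real.exp (‖z‖ * |ξ|)
          ≤ (‖z‖ * |ξ|) ^ (m + 1) * Real.exp (a * ‖z‖) := by
        refine mul_le_mul_of_nonneg_left (Real.exp_le_exp.2 ?_) (by positivity)
        nlinarith [norm_nonneg z, abs_nonneg ξ]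
      calc ‖g ξ‖ * ‖Complex.exp (Complex.I * z * ξ) -
            ∑ j ∈ Finset.range (m + 1), (Complex.I * z * ξ) ^ j / (j.factorial : ℂ)‖
          ≤ ‖g ξ‖ * ((‖z‖ * |ξ|) ^ (m + 1) * Real.exp (a * ‖z‖)) :=
            mul_le_mul_of_nonneg_left (h1.trans h2) (norm_nonneg _)
        _ = ‖g ξ‖ * |ξ| ^ (m + 1) * (‖z‖ ^ (m + 1) * Real.exp (a * ‖z‖)) := by
            rw [mul_pow]; ring
    · rw [hgsupp ξ hξ]
      simp only [zero_mul, norm_zero]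
      exact mul_nonneg (mul_nonneg (hu_nonneg ξ) (hv_nonneg ξ)) (by positivity)
  -- measurability of the integrand
  have hmeas_int : ∀ z : ℂ, AEStronglyMeasurable (fun ξ : ℝ => g ξ *
      (Complex.exp (Complex.I * z * ξ) -
        ∑ j ∈ Finset.range (m + 1), (Complex.I * z * ξ) ^ j / (j.factorial : ℂ))) volume := by
    intro z
    apply Measurable.aestronglyMeasurable
    apply hgmeas.mul
    have hcont : Continuous (fun ξ : ℝ => Complex.exp (Complex.I * z * ξ) -
        ∑ j ∈ Finset.range (m + 1), (Complex.I * z * ξ) ^ j / (j.factorial : ℂ)) := by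
      fun_prop
    exact hcont.measurable
  -- integrability of the integrand
  have hintg : ∀ z : ℂ, Integrable (fun ξ : ℝ => g ξ *
      (Complex.exp (Complex.I * z * ξ) -
        ∑ j ∈ Finset.range (m + 1), (Complex.I * z * ξ) ^ j / (j.factorial : ℂ))) := by
    intro z
    exact Integrable.mono' (hIuv.mul_const _) (hmeas_int z) (ae_of_all _ (hptb z))
  -- main bound
  have hbound : ∀ z : ℂ, ‖f z‖ ≤
      C * ‖z‖ ^ (m + 1) * Real.exp (a * ‖z‖) *
        Real.sqrt (∫ ξ : ℝ, ‖g ξ‖ ^ 2 * |ξ| ^ (2 * s)) := by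
    intro z
    rw [hf z, norm_mul, Complex.norm_real, Real.norm_of_nonneg hr0.le]
    have h1 : ‖∫ ξ : ℝ, g ξ * (Complex.exp (Complex.I * z * ξ) -
        ∑ j ∈ Finset.range (m + 1), (Complex.I * z * ξ) ^ j / (j.factorial : ℂ))‖
        ≤ ∫ ξ, u ξ * v ξ * (‖z‖ ^ (m + 1) * Real.exp (a * ‖z‖)) :=
      norm_integral_le_of_norm_le (hIuv.mul_const _) (ae_of_all _ (hptb z))
    have h2 : ∫ ξ, u ξ * v ξ * (‖z‖ ^ (m + 1) * Real.exp (a * ‖z‖))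
        = (∫ ξ, u ξ * v ξ) * (‖z‖ ^ (m + 1) * Real.exp (a * ‖z‖)) :=
      integral_mul_const _ _
    calc r * ‖∫ ξ : ℝ, g ξ * (Complex.exp (Complex.I * z * ξ) -
          ∑ j ∈ Finset.range (m + 1), (Complex.I * z * ξ) ^ j / (j.factorial : ℂ))‖
        ≤ r * ((∫ ξ, u ξ * v ξ) * (‖z‖ ^ (m + 1) * Real.exp (a * ‖z‖))) := by
          rw [← h2]; gcongr
      _ ≤ r * ((Real.sqrt (∫ ξ : ℝ, ‖g ξ‖ ^ 2 * |ξ| ^ (2 * s)) * Real.sqrt K) *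
            (‖z‖ ^ (m + 1) * Real.exp (a * ‖z‖))) := by
          gcongr
      _ = (r * Real.sqrt K) * ‖z‖ ^ (m + 1) * Real.exp (a * ‖z‖) *
            Real.sqrt (∫ ξ : ℝ, ‖g ξ‖ ^ 2 * |ξ| ^ (2 * s)) := by ring
      _ ≤ C * ‖z‖ ^ (m + 1) * Real.exp (a * ‖z‖) *
            Real.sqrt (∫ ξ : ℝ, ‖g ξ‖ ^ 2 * |ξ| ^ (2 * s)) := by
          gcongr
  -- differentiability
  have hdiff : Differentiable ℂ f := by
    have hfun : f = fun z => (((2 * Real.pi) ^ (-(1 / 2) : ℝ) : ℝ) : ℂ) *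
        ∫ ξ : ℝ, g ξ * (Complex.exp (Complex.I * z * ξ) -
          ∑ j ∈ Finset.range (m + 1), (Complex.I * z * ξ) ^ j / (j.factorial : ℂ)) :=
      funext hf
    rw [hfun]
    apply Differentiable.const_mul
    intro z₀
    set R : ℝ := ‖z₀‖ + 1 with hR_def
    have hR0 : 0 < R := by positivity
    -- the derivative integrand
    set F' : ℂ → ℝ → ℂ := fun z ξ => g ξ * ((Complex.exp (Complex.I * z * ξ) -
        ∑ j ∈ Finset.range m, (Complex.I * z * ξ) ^ j / (j.factorial : ℂ)) *
        (Complex.I * ξ)) with hF'_def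
    have hF'meas : AEStronglyMeasurable (F' z₀) volume := by
      apply Measurable.aestronglyMeasurable
      apply hgmeas.mul
      have hcont : Continuous (fun ξ : ℝ => (Complex.exp (Complex.I * z₀ * ξ) -
          ∑ j ∈ Finset.range m, (Complex.I * z₀ * ξ) ^ j / (j.factorial : ℂ)) *
          (Complex.I * ξ)) := by fun_prop
      exact hcont.measurable
    have hderiv : ∀ (ξ : ℝ), ∀ z ∈ Metric.ball z₀ 1,
        HasDerivAt (fun z => g ξ * (Complex.exp (Complex.I * z * ξ) -
          ∑ j ∈ Finset.range (m + 1), (Complex.I * z * ξ) ^ j / (j.factorial : ℂ)))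
          (F' z ξ) z := by
      intro ξ z _
      have hlin : HasDerivAt (fun z : ℂ => Complex.I * z * (ξ : ℂ)) (Complex.I * ξ) z := by
        simpa using ((hasDerivAt_id z).const_mul Complex.I).mul_const (ξ : ℂ)
      have := (tail_hasDerivAt m (Complex.I * z * ξ)).comp z hlin
      exact this.const_mul (g ξ)
    have hbnd : ∀ (ξ : ℝ), ∀ z ∈ Metric.ball z₀ 1,
        ‖F' z ξ‖ ≤ u ξ * v ξ * (R ^ m * Real.exp (a * R)) := by
      intro ξ z hz
      have hzR : ‖z‖ ≤ R := by
        have := mem_ball_iff_norm.1 hz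
        calc ‖z‖ = ‖z₀ + (z - z₀)‖ := by ring_nf
          _ ≤ ‖z₀‖ + ‖z - z₀‖ := norm_add_le _ _
          _ ≤ ‖z₀‖ + 1 := by linarith
      by_cases hξ : ξ ∈ Set.Icc (-a) a
      · have hξa : |ξ| ≤ a := abs_le.2 ⟨hξ.1, hξ.2⟩
        have h1 := exp_tail_bound m (Complex.I * z * ξ)
        rw [hwnorm z ξ] at h1
        rw [hF'_def]
        simp only [norm_mul, Complex.norm_I, one_mul, Complex.norm_real, Real.norm_eq_abs]
        rw [huv ξ]
        have h2 : (‖z‖ * |ξ|) ^ m * Real.exp (‖z‖ * |ξ|)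
            ≤ (R * |ξ|) ^ m * Real.exp (a * R) := by
          refine mul_le_mul ?_ (Real.exp_le_exp.2 ?_) (Real.exp_pos _).le (by positivity)
          · exact pow_le_pow_left₀ (by positivity)
              (mul_le_mul_of_nonneg_right hzR (abs_nonneg ξ)) m
          · nlinarith [norm_nonneg z, abs_nonneg ξ, hR0.le]
        calc ‖g ξ‖ * (‖Complex.exp (Complex.I * z * ξ) -
              ∑ j ∈ Finset.range m, (Complex.I * z * ξ) ^ j / (j.factorial : ℂ)‖ * |ξ|)
            ≤ ‖g ξ‖ * (((R * |ξ|) ^ m * Real.exp (a * R)) * |ξ|) :=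
              mul_le_mul_of_nonneg_left
                (mul_le_mul_of_nonneg_right (h1.trans h2) (abs_nonneg ξ)) (norm_nonneg _)
          _ = ‖g ξ‖ * |ξ| ^ (m + 1) * (R ^ m * Real.exp (a * R)) := by
              rw [mul_pow, pow_succ]; ring
      · rw [hF'_def]
        simp only [hgsupp ξ hξ, zero_mul, norm_zero]
        exact mul_nonneg (mul_nonneg (hu_nonneg ξ) (hv_nonneg ξ)) (by positivity)
    have key := hasDerivAt_integral_of_dominated_loc_of_deriv_le (μ := volume)
      (F := fun z ξ => g ξ * (Complex.exp (Complex.I * z * ξ) -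
        ∑ j ∈ Finset.range (m + 1), (Complex.I * z * ξ) ^ j / (j.factorial : ℂ)))
      (F' := F') (x₀ := z₀)
      (bound := fun ξ => u ξ * v ξ * (R ^ m * Real.exp (a * R)))
      (Metric.ball_mem_nhds z₀ one_pos) (Eventually.of_forall fun z => hmeas_int z) (hintg z₀) hF'meas
      (ae_of_all _ fun ξ z hz => hbnd ξ z hz) (hIuv.mul_const _)
      (ae_of_all _ fun ξ z hz => hderiv ξ z hz)
    exact key.2.differentiableAt
  refine ⟨hintg, hdiff, hbound, ?_⟩
  -- exponential type
  intro ε hε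
  set B : ℝ := C * Real.sqrt (∫ ξ : ℝ, ‖g ξ‖ ^ 2 * |ξ| ^ (2 * s)) with hB_def
  have hB0 : 0 ≤ B := mul_nonneg hC0.le (Real.sqrt_nonneg _)
  refine ⟨B * ((m + 1).factorial / ε ^ (m + 1)) + 1, by positivity, fun z => ?_⟩
  have hpow : ‖z‖ ^ (m + 1) ≤ ((m + 1).factorial / ε ^ (m + 1)) * Real.exp (ε * ‖z‖) := by
    have hx : (0 : ℝ) ≤ ε * ‖z‖ := by positivity
    have h1 : (ε * ‖z‖) ^ (m + 1) / ((m + 1).factorial : ℝ) ≤ Real.exp (ε * ‖z‖) := by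
      have h2 := Real.sum_le_exp_of_nonneg hx (m + 2)
      refine le_trans ?_ h2
      refine Finset.single_le_sum (f := fun i => (ε * ‖z‖) ^ i / (i.factorial : ℝ))
        (fun i _ => by positivity) ?_
      simp [Finset.mem_range]
    have hfac : (0 : ℝ) < ((m + 1).factorial : ℝ) := by positivity
    rw [div_le_iff₀ hfac] at h1
    rw [mul_pow] at h1
    have hε1 : (0 : ℝ) < ε ^ (m + 1) := by positivity
    rw [div_mul_eq_mul_div, le_div_iff₀ hε1]
    calc ‖z‖ ^ (m + 1) * ε ^ (m + 1) = ε ^ (m + 1) * ‖z‖ ^ (m + 1) := mul_comm _ _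
      _ ≤ Real.exp (ε * ‖z‖) * ((m + 1).factorial : ℝ) := h1
      _ = ((m + 1).factorial : ℝ) * Real.exp (ε * ‖z‖) := mul_comm _ _
  calc ‖f z‖ ≤ C * ‖z‖ ^ (m + 1) * Real.exp (a * ‖z‖) *
        Real.sqrt (∫ ξ : ℝ, ‖g ξ‖ ^ 2 * |ξ| ^ (2 * s)) := hbound z
    _ = B * (‖z‖ ^ (m + 1) * Real.exp (a * ‖z‖)) := by rw [hB_def]; ring
    _ ≤ B * ((((m + 1).factorial / ε ^ (m + 1)) * Real.exp (ε * ‖z‖)) * Real.exp (a * ‖z‖)) :=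
        mul_le_mul_of_nonneg_left
          (mul_le_mul_of_nonneg_right hpow (Real.exp_pos _).le) hB0
    _ = B * ((m + 1).factorial / ε ^ (m + 1)) * Real.exp ((a + ε) * ‖z‖) := by
        rw [show (a + ε) * ‖z‖ = ε * ‖z‖ + a * ‖z‖ by ring, Real.exp_add]; ring
    _ ≤ (B * ((m + 1).factorial / ε ^ (m + 1)) + 1) * Real.exp ((a + ε) * ‖z‖) :=
        mul_le_mul_of_nonneg_right (by linarith) (Real.exp_pos _).le
end
end

section
/- Let a>0, 0<s<1/2, let g : ℝ → ℂ be measurable, vanishing outside [-a,a], with ∫_{-a}^{a}|g(ξ)|²|ξ|^{2s}dξ < ∞, and define f(z) = (2π)^{-1/2} ∫_{-a}^{a} g(ξ)e^{izξ}dξ. For n ∈ ℤ set c_n = (2a)^{-1/2} ∫_{-a}^{a} |ξ|^{s} g(ξ) e^{-inπξ/a} dξ and ψ_n(z) = (2√(aπ))^{-1} ∫_{-a}^{a} e^{inπξ/a} e^{izξ} |ξ|^{-s} dξ. Then the series Σ_{n∈ℤ} c_n ψ_n(z) converges to f(z), uniformly on every compact subset of ℂ. -/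
open MeasureTheory Complex Filter Topology

noncomputable section

open Set AddCircle

open scoped ComplexInnerProductSpace ENNReal NNReal

namespace Stmt11Aux

lemma measurable_liftIoc' {T : ℝ} [hT : Fact (0 < T)] {β : Type*} [MeasurableSpace β]
    (t : ℝ) (u : ℝ → β) (hu : Measurable u) :
    Measurable (AddCircle.liftIoc T t u) := by
  have : AddCircle.liftIoc T t u = (u ∘ (Subtype.val)) ∘ (AddCircle.measurableEquivIoc T t) := rfl
  rw [this]
  exact (hu.comp measurable_subtype_coe).comp (AddCircle.measurableEquivIoc T t).measurable

lemma integrable_abs_rpow' {a r : ℝ} (ha : 0 < a) (hr : -1 < r) :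
    IntegrableOn (fun ξ : ℝ => |ξ| ^ r) (Set.Ioc (-a) a) := by
  have hIoo : IntegrableOn (fun ξ : ℝ => |ξ| ^ r) (Set.Ioo 0 a) := by
    refine ((intervalIntegral.integrableOn_Ioo_rpow_iff ha).2 hr).congr_fun
      (fun x hx => ?_) measurableSet_Ioo
    rw [abs_of_pos hx.1]
  have hpos : IntegrableOn (fun ξ : ℝ => |ξ| ^ r) (Set.Ioc 0 a) := by
    rwa [integrableOn_Ioc_iff_integrableOn_Ioo]
  have hG : IntegrableOn (fun ξ : ℝ => |ξ| ^ r) (Set.Ico 0 a) := by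
    rwa [integrableOn_Ico_iff_integrableOn_Ioo]
  have hneg : IntegrableOn (fun ξ : ℝ => |ξ| ^ r) (Set.Ioc (-a) 0) := by
    have hGi : Integrable ((Set.Ico 0 a).indicator (fun ξ : ℝ => |ξ| ^ r)) :=
      (integrable_indicator_iff measurableSet_Ico).2 hG
    have hcomp : Integrable (fun x : ℝ =>
        (Set.Ico 0 a).indicator (fun ξ : ℝ => |ξ| ^ r) (-x)) := by
      have := (Measure.measurePreserving_neg (volume : Measure ℝ)).integrable_comp
        hGi.aestronglyMeasurable
      exact this.2 hGi
    have heq : (Set.Ioc (-a) 0).indicator (fun ξ : ℝ => |ξ| ^ r) =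
        fun x : ℝ => (Set.Ico 0 a).indicator (fun ξ : ℝ => |ξ| ^ r) (-x) := by
      funext x
      by_cases hx : x ∈ Set.Ioc (-a) 0
      · rw [Set.indicator_of_mem hx, Set.indicator_of_mem
          (by constructor <;> [linarith [hx.2]; linarith [hx.1]]), abs_neg]
      · rw [Set.indicator_of_notMem hx, Set.indicator_of_notMem (by
          intro hmem
          exact hx ⟨by linarith [hmem.2], by linarith [hmem.1]⟩)]
    exact (integrable_indicator_iff measurableSet_Ioc).1 (heq ▸ hcomp)
  have hunion := hneg.union hpos
  rwa [Set.Ioc_union_Ioc_eq_Ioc (by linarith) (by linarith)] at hunion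

section Defs

variable (a s : ℝ) [hT : Fact (0 < 2 * a)]

/-- the weighted function `|ξ|^s g ξ` -/
def hh (g : ℝ → ℂ) : ℝ → ℂ := fun ξ => ((|ξ| ^ s : ℝ) : ℂ) * g ξ

/-- its lift to the circle -/
def HH (g : ℝ → ℂ) : AddCircle (2 * a) → ℂ := AddCircle.liftIoc (2 * a) (-a) (hh s g)

/-- the kernel -/
def kk (z : ℂ) : ℝ → ℂ := fun ξ =>
  Complex.exp (Complex.I * z * ξ) * ((|ξ| ^ (-s) : ℝ) : ℂ)

/-- its lift -/
def KK (z : ℂ) : AddCircle (2 * a) → ℂ := AddCircle.liftIoc (2 * a) (-a) (kk s z)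

/-- the weight lift -/
def WW : AddCircle (2 * a) → ℝ := AddCircle.liftIoc (2 * a) (-a) (fun ξ => |ξ| ^ (-s))

variable {a s}

lemma key (ha : 0 < a) (F : AddCircle (2 * a) → ℂ) :
    (∫ ξ in Set.Ioc (-a) a, F ↑ξ) = (2 * a) * ∫ x, F x ∂AddCircle.haarAddCircle := by
  have h1 := AddCircle.integral_preimage (T := 2 * a) (-a) F
  rw [show (-a + 2 * a) = a by ring] at h1
  rw [h1, AddCircle.volume_eq_smul_haarAddCircle, integral_smul_measure,
    ENNReal.toReal_ofReal (by linarith : (0:ℝ) ≤ 2 * a)]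
  simp [smul_eq_mul]

lemma integrable_haar_of {β : Type*} [NormedAddCommGroup β] [MeasurableSpace β] [BorelSpace β]
    [SecondCountableTopology β]
    (ha : 0 < a) (F : AddCircle (2 * a) → β) (hF : Measurable F)
    (hi : IntegrableOn (fun ξ : ℝ => F ↑ξ) (Set.Ioc (-a) a)) :
    Integrable F AddCircle.haarAddCircle := by
  have h2 := (AddCircle.measurePreserving_mk (2 * a) (-a)).integrable_comp
    hF.aestronglyMeasurable
  rw [show (-a + 2 * a) = a by ring] at h2
  have hvol : Integrable F (volume : Measure (AddCircle (2 * a))) := h2.1 hi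
  rw [AddCircle.volume_eq_smul_haarAddCircle] at hvol
  exact (integrable_smul_measure (by simp [ENNReal.ofReal_eq_zero]; linarith)
    ENNReal.ofReal_ne_top).1 hvol

lemma mem_Ioc_of (x : AddCircle (2 * a)) :
    ((AddCircle.equivIoc (2 * a) (-a) x : ℝ)) ∈ Set.Ioc (-a) (-a + 2 * a) :=
  (AddCircle.equivIoc (2 * a) (-a) x).2

lemma liftIoc_eq (u : ℝ → ℂ) (x : AddCircle (2 * a)) :
    AddCircle.liftIoc (2 * a) (-a) u x = u ((AddCircle.equivIoc (2 * a) (-a) x : ℝ)) := rfl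

lemma liftIocR_eq (u : ℝ → ℝ) (x : AddCircle (2 * a)) :
    AddCircle.liftIoc (2 * a) (-a) u x = u ((AddCircle.equivIoc (2 * a) (-a) x : ℝ)) := rfl

end Defs

end Stmt11Aux

open Stmt11Aux

theorem stmt11 (a s : ℝ) (ha : 0 < a) (hs0 : 0 < s) (hs : s < 1 / 2)
    (g : ℝ → ℂ) (f : ℂ → ℂ) (c : ℤ → ℂ) (ψ : ℤ → ℂ → ℂ)
    (hgm : Measurable g)
    (hgsupp : ∀ ξ : ℝ, ξ ∉ Set.Icc (-a) a → g ξ = 0)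
    (hgL2 : Integrable (fun ξ : ℝ => ‖g ξ‖ ^ 2 * |ξ| ^ (2 * s)))
    (hf : ∀ z : ℂ, f z =
      (((2 * Real.pi) ^ (-(1 / 2) : ℝ) : ℝ) : ℂ) *
        ∫ ξ : ℝ, g ξ * Complex.exp (Complex.I * z * ξ))
    (hc : ∀ n : ℤ, c n = (((Real.sqrt (2 * a))⁻¹ : ℝ) : ℂ) *
      ∫ ξ in Set.Icc (-a) a, ((|ξ| ^ s : ℝ) : ℂ) * g ξ *
        Complex.exp (-Complex.I * n * Real.pi * ξ / a))
    (hψ : ∀ (n : ℤ) (z : ℂ), ψ n z = (((2 * Real.sqrt (a * Real.pi))⁻¹ : ℝ) : ℂ) *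
      ∫ ξ in Set.Icc (-a) a, Complex.exp (Complex.I * n * Real.pi * ξ / a) *
        Complex.exp (Complex.I * z * ξ) * ((|ξ| ^ (-s) : ℝ) : ℂ)) :
    ∀ K : Set ℂ, IsCompact K →
      TendstoUniformlyOn
        (fun (N : ℕ) (z : ℂ) => ∑ n ∈ Finset.Icc (-(N : ℤ)) (N : ℤ), c n * ψ n z)
        f Filter.atTop K := by
  intro K hK
  haveI hT : Fact (0 < 2 * a) := ⟨by linarith⟩
  -- measurability facts
  have hhm : Measurable (hh s g) := by
    unfold hh; fun_prop
  have hHm : Measurable (HH a s g) := measurable_liftIoc' _ _ hhm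
  have hkm : ∀ z : ℂ, Measurable (kk s z) := by
    intro z; unfold kk; fun_prop
  have hKm : ∀ z : ℂ, Measurable (KK a s z) := fun z => measurable_liftIoc' _ _ (hkm z)
  have hWm : Measurable (WW a s) := measurable_liftIoc' _ _ (by fun_prop)
  -- membership in L²
  have hHmem : MemLp (HH a s g) 2 AddCircle.haarAddCircle := by
    refine (memLp_two_iff_integrable_sq_norm hHm.aestronglyMeasurable).2 ?_
    apply integrable_haar_of ha _ (hHm.norm.pow_const 2)
    refine (hgL2.integrableOn).congr ?_
    filter_upwards [ae_restrict_mem measurableSet_Ioc] with ξ hξ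
    have hmem : ξ ∈ Set.Ioc (-a) (-a + 2 * a) := by
      rwa [show -a + 2 * a = a by ring]
    rw [show HH a s g ↑ξ = hh s g ξ from AddCircle.liftIoc_coe_apply hmem]
    simp only [hh, norm_mul, Complex.norm_real, Real.norm_eq_abs]
    rw [_root_.abs_of_nonneg (Real.rpow_nonneg (abs_nonneg ξ) s), mul_pow,
      ← Real.rpow_natCast (|ξ| ^ s) 2, ← Real.rpow_mul (abs_nonneg ξ),
      show (s * (2:ℕ) : ℝ) = 2 * s by push_cast; ring]
    ring
  have hWmem : MemLp (WW a s) 2 AddCircle.haarAddCircle := by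
    refine (memLp_two_iff_integrable_sq_norm hWm.aestronglyMeasurable).2 ?_
    apply integrable_haar_of ha _ (hWm.norm.pow_const 2)
    refine ((integrable_abs_rpow' ha (by linarith : (-1:ℝ) < -(2*s))).congr ?_)
    filter_upwards [ae_restrict_mem measurableSet_Ioc] with ξ hξ
    have hmem : ξ ∈ Set.Ioc (-a) (-a + 2 * a) := by
      rwa [show -a + 2 * a = a by ring]
    rw [show WW a s ↑ξ = |ξ| ^ (-s) from AddCircle.liftIoc_coe_apply hmem]
    rw [Real.norm_eq_abs, _root_.abs_of_nonneg (Real.rpow_nonneg (abs_nonneg ξ) (-s)),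
      ← Real.rpow_natCast (|ξ| ^ (-s)) 2, ← Real.rpow_mul (abs_nonneg ξ),
      show (-s * (2:ℕ) : ℝ) = -(2 * s) by push_cast; ring]
  -- pointwise bound for the kernel
  have hKbound : ∀ (z : ℂ) (R : ℝ), ‖z‖ ≤ R → ∀ x : AddCircle (2 * a),
      ‖KK a s z x‖ ≤ Real.exp (R * a) * ‖WW a s x‖ := by
    intro z R hz x
    rw [show KK a s z x = kk s z ((AddCircle.equivIoc (2*a) (-a) x : ℝ)) from rfl,
        show WW a s x = |((AddCircle.equivIoc (2*a) (-a) x : ℝ) : ℝ)| ^ (-s) from rfl]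
    set ξ : ℝ := ((AddCircle.equivIoc (2*a) (-a) x : ℝ)) with hξdef
    have hmem := (AddCircle.equivIoc (2*a) (-a) x).2
    have habs : |ξ| ≤ a := by
      have h1' := hmem.1
      have h2' := hmem.2
      rw [abs_le]
      constructor <;> linarith
    simp only [kk, norm_mul]
    have h1 : ‖Complex.exp (Complex.I * z * ξ)‖ ≤ Real.exp (R * a) := by
      rw [Complex.norm_exp]
      apply Real.exp_le_exp.2
      have hre : (Complex.I * z * (ξ:ℂ)).re = -z.im * ξ := by
        simp [Complex.mul_re, Complex.mul_im]
      rw [hre]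
      have him : |z.im| ≤ R := le_trans (by simpa using Complex.abs_im_le_norm z) hz
      calc -z.im * ξ ≤ |(-z.im) * ξ| := le_abs_self _
        _ = |z.im| * |ξ| := by rw [abs_mul, abs_neg]
        _ ≤ R * a := mul_le_mul him habs (abs_nonneg _) (le_trans (norm_nonneg z) hz)
    rw [show ‖((|ξ| ^ (-s) : ℝ) : ℂ)‖ = ‖(|ξ| ^ (-s) : ℝ)‖ from Complex.norm_real _]
    exact mul_le_mul_of_nonneg_right h1 (norm_nonneg _)
  have hKmem : ∀ z : ℂ, MemLp (KK a s z) 2 AddCircle.haarAddCircle := by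
    intro z
    have hb := hKbound z ‖z‖ le_rfl
    refine MemLp.of_le (hWmem.const_smul (Real.exp (‖z‖ * a)))
      (hKm z).aestronglyMeasurable (Filter.Eventually.of_forall fun x => ?_)
    calc ‖KK a s z x‖ ≤ Real.exp (‖z‖ * a) * ‖WW a s x‖ := hb x
    _ = ‖Real.exp (‖z‖ * a) • WW a s x‖ := by
        simp [norm_smul, Real.abs_exp]
  have hKCmem : ∀ z : ℂ, MemLp (fun x => (starRingEnd ℂ) (KK a s z x)) 2
      AddCircle.haarAddCircle := by
    intro z
    refine MemLp.of_le (hKmem z) ((continuous_star.measurable.comp (hKm z)).aestronglyMeasurable)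
      (Filter.Eventually.of_forall fun x => ?_)
    simp
  -- Lp elements
  set HL : Lp ℂ 2 (AddCircle.haarAddCircle (T := 2 * a)) := hHmem.toLp _ with hHL
  set u : ℂ → Lp ℂ 2 (AddCircle.haarAddCircle (T := 2 * a)) :=
    fun z => (hKCmem z).toLp _ with hu
  -- inner products as integrals
  have hinnerH : ∀ z : ℂ, (⟪u z, HL⟫) =
      ∫ x, KK a s z x * HH a s g x ∂AddCircle.haarAddCircle := by
    intro z
    rw [hu, hHL, MeasureTheory.L2.inner_def]
    apply integral_congr_ae
    filter_upwards [MemLp.coeFn_toLp (hKCmem z), MemLp.coeFn_toLp hHmem] with x h1 h2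
    rw [h1, h2]
    simp [RCLike.inner_apply]
    ring
  have hinnerF : ∀ (z : ℂ) (n : ℤ), (⟪u z, fourierLp 2 n⟫) =
      ∫ x, KK a s z x * fourier n x ∂AddCircle.haarAddCircle := by
    intro z n
    rw [hu, MeasureTheory.L2.inner_def]
    apply integral_congr_ae
    filter_upwards [MemLp.coeFn_toLp (hKCmem z), coeFn_fourierLp 2 n] with x h1 h2
    rw [h1, h2]
    simp [RCLike.inner_apply]
    ring
  -- the constant
  set C : ℝ := (2 * Real.pi) ^ (-(1 / 2) : ℝ) * (2 * a) with hC
  -- identity for f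
  have hfz : ∀ z : ℂ, f z = (C : ℂ) * (⟪u z, HL⟫) := by
    intro z
    rw [hf z, hinnerH z]
    have h1 : (∫ ξ : ℝ, g ξ * Complex.exp (Complex.I * z * ξ))
        = ∫ ξ in Set.Icc (-a) a, g ξ * Complex.exp (Complex.I * z * ξ) := by
      symm
      apply setIntegral_eq_integral_of_forall_compl_eq_zero
      intro ξ hξ
      rw [hgsupp ξ hξ, zero_mul]
    have h2 : (∫ ξ in Set.Icc (-a) a, g ξ * Complex.exp (Complex.I * z * ξ))
        = ∫ ξ in Set.Ioc (-a) a, g ξ * Complex.exp (Complex.I * z * ξ) :=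
      integral_Icc_eq_integral_Ioc
    have h3 : (∫ ξ in Set.Ioc (-a) a, g ξ * Complex.exp (Complex.I * z * ξ))
        = ∫ ξ in Set.Ioc (-a) a,
            (fun x : AddCircle (2*a) => KK a s z x * HH a s g x) ↑ξ := by
      apply setIntegral_congr_ae measurableSet_Ioc
      have hne : ∀ᵐ ξ : ℝ, ξ ≠ 0 := by
        rw [ae_iff]
        have hset : {ξ : ℝ | ¬ ξ ≠ 0} = ({0} : Set ℝ) := by ext ξ; simp
        rw [hset]
        exact Real.volume_singleton
      filter_upwards [hne] with ξ h0 hξ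
      have hmem : ξ ∈ Set.Ioc (-a) (-a + 2 * a) := by rwa [show -a + 2*a = a by ring]
      rw [show KK a s z ↑ξ = kk s z ξ from AddCircle.liftIoc_coe_apply hmem,
          show HH a s g ↑ξ = hh s g ξ from AddCircle.liftIoc_coe_apply hmem]
      simp only [kk, hh]
      have habs : (0:ℝ) < |ξ| := abs_pos.2 h0
      have hprod : (|ξ| ^ (-s)) * (|ξ| ^ s) = 1 := by
        rw [← Real.rpow_add habs]
        simp
      calc g ξ * Complex.exp (Complex.I * z * ξ)
          = Complex.exp (Complex.I * z * ξ) * (((|ξ| ^ (-s) * |ξ| ^ s : ℝ)) : ℂ) * g ξ := by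
            rw [hprod]
            push_cast
            ring
        _ = Complex.exp (Complex.I * z * ↑ξ) * ↑(|ξ| ^ (-s)) * (↑(|ξ| ^ s) * g ξ) := by
            push_cast
            ring
    rw [h1, h2, h3, key ha (fun x : AddCircle (2*a) => KK a s z x * HH a s g x), hC]
    push_cast
    ring
  -- identity for the terms
  have hterm : ∀ (n : ℤ) (z : ℂ), c n * ψ n z =
      (C : ℂ) * (⟪u z, fourierCoeff (HH a s g) n • fourierLp 2 n⟫) := by
    intro n z
    have ha' : (a:ℂ) ≠ 0 := Complex.ofReal_ne_zero.2 (ne_of_gt ha)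
    -- the coefficient identity
    have hcn : c n = ((Real.sqrt (2*a) : ℝ) : ℂ) * fourierCoeff (HH a s g) n := by
      rw [hc n]
      have e1 : (∫ ξ in Set.Icc (-a) a, ((|ξ| ^ s : ℝ) : ℂ) * g ξ *
          Complex.exp (-Complex.I * n * Real.pi * ξ / a))
          = ∫ ξ in Set.Ioc (-a) a, (fun x : AddCircle (2*a) =>
              fourier (-n) x * HH a s g x) ↑ξ := by
        rw [integral_Icc_eq_integral_Ioc]
        apply setIntegral_congr_fun measurableSet_Ioc
        intro ξ hξ
        have hmem : ξ ∈ Set.Ioc (-a) (-a + 2 * a) := by rwa [show -a + 2*a = a by ring]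
        simp only
        rw [show HH a s g ↑ξ = hh s g ξ from AddCircle.liftIoc_coe_apply hmem,
            fourier_coe_apply]
        simp only [hh]
        rw [show Complex.exp (2 * ↑Real.pi * Complex.I * ((-n : ℤ) : ℂ) * ↑ξ / ↑(2*a))
            = Complex.exp (-Complex.I * n * Real.pi * ξ / a) from by
          congr 1
          push_cast
          field_simp]
        ring
      have e2 : (∫ x, (fun x : AddCircle (2*a) => fourier (-n) x * HH a s g x) x
          ∂AddCircle.haarAddCircle) = fourierCoeff (HH a s g) n := by
        simp only [fourierCoeff, smul_eq_mul]
      rw [e1, key ha (fun x : AddCircle (2*a) => fourier (-n) x * HH a s g x), e2]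
      have hsq : Real.sqrt (2*a) * Real.sqrt (2*a) = 2*a := Real.mul_self_sqrt (by linarith)
      have hne : Real.sqrt (2*a) ≠ 0 := by positivity
      have hre : ((Real.sqrt (2*a))⁻¹ : ℝ) * (2*a) = Real.sqrt (2*a) := by
        have h22 : Real.sqrt 2 * Real.sqrt 2 = 2 := Real.mul_self_sqrt (by norm_num)
        have ha2 : Real.sqrt a * Real.sqrt a = a := Real.mul_self_sqrt (le_of_lt ha)
        field_simp
        linear_combination -hsq
      calc (((Real.sqrt (2*a))⁻¹ : ℝ) : ℂ) * (2 * (a:ℂ) * fourierCoeff (HH a s g) n)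
          = ((((Real.sqrt (2*a))⁻¹ : ℝ) * (2*a) : ℝ) : ℂ) * fourierCoeff (HH a s g) n := by
            push_cast
            ring
        _ = ((Real.sqrt (2*a) : ℝ) : ℂ) * fourierCoeff (HH a s g) n := by rw [hre]
    -- the eigenfunction identity
    have hψn : ψ n z = (((2 * Real.sqrt (a * Real.pi))⁻¹ : ℝ) : ℂ) * ((2*a) *
        ∫ x, KK a s z x * fourier n x ∂AddCircle.haarAddCircle) := by
      rw [hψ n z]
      congr 1
      rw [← key ha (fun x : AddCircle (2*a) => KK a s z x * fourier n x),
        integral_Icc_eq_integral_Ioc]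
      apply setIntegral_congr_fun measurableSet_Ioc
      intro ξ hξ
      have hmem : ξ ∈ Set.Ioc (-a) (-a + 2 * a) := by rwa [show -a + 2*a = a by ring]
      simp only
      rw [show KK a s z ↑ξ = kk s z ξ from AddCircle.liftIoc_coe_apply hmem,
          fourier_coe_apply]
      simp only [kk]
      rw [show Complex.exp (2 * ↑Real.pi * Complex.I * ((n : ℤ) : ℂ) * ↑ξ / ↑(2*a))
          = Complex.exp (Complex.I * n * Real.pi * ξ / a) from by
        congr 1
        push_cast
        field_simp]
      ring
    -- the constant identity
    have h2π : Real.sqrt (2*a) * Real.sqrt (2*Real.pi) = 2 * Real.sqrt (a*Real.pi) := by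
      rw [← Real.sqrt_mul (by linarith : (0:ℝ) ≤ 2*a),
        show (2*a)*(2*Real.pi) = 2^2*(a*Real.pi) by ring,
        Real.sqrt_mul (by norm_num : (0:ℝ) ≤ (2:ℝ)^2),
        Real.sqrt_sq (by norm_num : (0:ℝ) ≤ (2:ℝ))]
    have hrw : (2*Real.pi) ^ (-(1/2) : ℝ) = (Real.sqrt (2*Real.pi))⁻¹ := by
      rw [Real.rpow_neg (by positivity), Real.sqrt_eq_rpow]
    have hCconst : Real.sqrt (2*a) * ((2 * Real.sqrt (a*Real.pi))⁻¹ * (2*a)) = C := by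
      rw [hC, hrw]
      have hπpos : (0:ℝ) < Real.pi := Real.pi_pos
      have hs1 : (0:ℝ) < Real.sqrt (2*Real.pi) := Real.sqrt_pos.2 (by linarith)
      have hs2 : (0:ℝ) < Real.sqrt (a*Real.pi) := Real.sqrt_pos.2 (by positivity)
      have h22 : Real.sqrt 2 * Real.sqrt 2 = 2 := Real.mul_self_sqrt (by norm_num)
      field_simp
      linear_combination h2π
    have hCc : ((C : ℝ) : ℂ) = ((Real.sqrt (2*a) : ℝ) : ℂ) *
        ((((2 * Real.sqrt (a*Real.pi))⁻¹ : ℝ)) : ℂ) * ((2*a : ℝ) : ℂ) := by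
      rw [← hCconst]
      push_cast
      ring
    rw [hcn, hψn, inner_smul_right, hinnerF z n, hCc]
    push_cast
    ring
  -- L² convergence of the symmetric partial sums
  have hconv : Tendsto (fun N : ℕ => ∑ n ∈ Finset.Icc (-(N : ℤ)) (N : ℤ),
      fourierCoeff (HH a s g) n • (fourierLp 2 n : Lp ℂ 2 (AddCircle.haarAddCircle (T := 2*a))))
      atTop (𝓝 HL) := by
    have hcoeq : ∀ n : ℤ, fourierCoeff ((HL : AddCircle (2*a) → ℂ)) n
        = fourierCoeff (HH a s g) n := by
      intro n
      simp only [fourierCoeff]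
      apply integral_congr_ae
      filter_upwards [MemLp.coeFn_toLp hHmem] with x hx
      rw [hHL, hx]
    have hsumL := hasSum_fourier_series_L2 HL
    simp only [hcoeq] at hsumL
    have hmono : Monotone (fun N : ℕ => Finset.Icc (-(N:ℤ)) (N:ℤ)) := by
      intro M N h
      apply Finset.Icc_subset_Icc
      · exact neg_le_neg (by exact_mod_cast h)
      · exact_mod_cast h
    have hcof : ∀ x : ℤ, ∃ N : ℕ, x ∈ Finset.Icc (-(N:ℤ)) (N:ℤ) := by
      intro x
      refine ⟨x.natAbs, ?_⟩
      rw [Finset.mem_Icc]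
      omega
    have hstep : Tendsto ((fun t : Finset ℤ => ∑ n ∈ t, fourierCoeff (HH a s g) n •
        (fourierLp 2 n : Lp ℂ 2 (AddCircle.haarAddCircle (T := 2*a)))) ∘
        (fun N : ℕ => Finset.Icc (-(N:ℤ)) (N:ℤ))) atTop (𝓝 HL) :=
      Filter.Tendsto.comp hsumL (tendsto_atTop_finset_of_monotone hmono hcof)
    exact hstep
  -- uniform bound for ‖u z‖ on K
  obtain ⟨R, hKR⟩ := hK.isBounded.subset_closedBall 0
  set B : ℝ := Real.exp (R * a) * (eLpNorm (WW a s) 2 AddCircle.haarAddCircle).toReal with hB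
  have hB0 : 0 ≤ B := by positivity
  have hub : ∀ z ∈ K, ‖u z‖ ≤ B := by
    intro z hz
    have hzR : ‖z‖ ≤ R := by
      have := hKR hz
      rwa [Metric.mem_closedBall, dist_zero_right] at this
    rw [hu]
    rw [MeasureTheory.Lp.norm_toLp]
    have he1 : eLpNorm (fun x => (starRingEnd ℂ) (KK a s z x)) 2 AddCircle.haarAddCircle
        = eLpNorm (KK a s z) 2 AddCircle.haarAddCircle :=
      eLpNorm_congr_norm_ae (Filter.Eventually.of_forall fun x => by simp)
    rw [he1]
    have he2 : eLpNorm (KK a s z) 2 AddCircle.haarAddCircle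
        ≤ eLpNorm (Real.exp (R*a) • WW a s) 2 AddCircle.haarAddCircle := by
      apply eLpNorm_mono
      intro x
      simpa [norm_smul, Real.abs_exp] using hKbound z R hzR x
    rw [eLpNorm_const_smul] at he2
    calc (eLpNorm (KK a s z) 2 AddCircle.haarAddCircle).toReal
        ≤ ((‖Real.exp (R*a)‖₊ : ENNReal) * eLpNorm (WW a s) 2 AddCircle.haarAddCircle).toReal := by
          apply ENNReal.toReal_mono (ENNReal.mul_ne_top (by simp) hWmem.eLpNorm_ne_top)
          rw [← enorm_eq_nnnorm]
          simpa [ENNReal.smul_def] using he2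
      _ = B := by
          rw [ENNReal.toReal_mul, ENNReal.coe_toReal, coe_nnnorm, Real.norm_eq_abs,
            Real.abs_exp, hB]
  -- conclusion
  rw [Metric.tendstoUniformlyOn_iff]
  intro ε hε
  have hδ : (0:ℝ) < ε / (|C| * B + 1) := by positivity
  have hev : ∀ᶠ N : ℕ in atTop, ‖HL - ∑ n ∈ Finset.Icc (-(N : ℤ)) (N : ℤ),
      fourierCoeff (HH a s g) n • (fourierLp 2 n : Lp ℂ 2 (AddCircle.haarAddCircle (T := 2*a)))‖
      < ε / (|C| * B + 1) := by
    have := Metric.tendsto_nhds.1 hconv _ hδ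
    filter_upwards [this] with N hN
    rw [dist_eq_norm, norm_sub_rev] at hN
    exact hN
  filter_upwards [hev] with N hN z hz
  set S : Lp ℂ 2 (AddCircle.haarAddCircle (T := 2*a)) :=
    ∑ n ∈ Finset.Icc (-(N : ℤ)) (N : ℤ), fourierCoeff (HH a s g) n • fourierLp 2 n with hS
  have hsum : ∑ n ∈ Finset.Icc (-(N : ℤ)) (N : ℤ), c n * ψ n z = (C : ℂ) * (⟪u z, S⟫) := by
    rw [hS, inner_sum, Finset.mul_sum]
    exact Finset.sum_congr rfl fun n _ => hterm n z
  rw [dist_eq_norm, hfz z, hsum, ← mul_sub, ← inner_sub_right]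
  have hCS : ‖(⟪u z, HL - S⟫ : ℂ)‖ ≤ ‖u z‖ * ‖HL - S‖ := norm_inner_le_norm _ _
  calc ‖(C : ℂ) * (⟪u z, HL - S⟫)‖
      = |C| * ‖(⟪u z, HL - S⟫ : ℂ)‖ := by
        rw [norm_mul, Complex.norm_real, Real.norm_eq_abs]
    _ ≤ |C| * (‖u z‖ * ‖HL - S‖) := by gcongr
    _ ≤ |C| * (B * (ε / (|C| * B + 1))) := by
        have h1 : ‖u z‖ ≤ B := hub z hz
        have h2 : ‖HL - S‖ ≤ ε / (|C| * B + 1) := le_of_lt hN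
        gcongr
    _ < ε := by
        rw [← mul_assoc]
        have h1 : |C| * B < |C| * B + 1 := by linarith
        calc |C| * B * (ε / (|C| * B + 1)) < (|C| * B + 1) * (ε / (|C| * B + 1)) :=
              mul_lt_mul_of_pos_right h1 hδ
          _ = ε := by field_simp
end
end

section
/- Let a>0 and 0<s<1/2. There do NOT exist a sequence (λ_n)_{n∈ℤ} of real numbers and constants A,B>0 such that for every measurable g vanishing outside [-a,a] with ∫_{-a}^{a}|g(ξ)|²|ξ|^{2s}dξ < ∞, one has A ∫_{-a}^{a}|g(ξ)|²|ξ|^{2s}dξ ≤ Σ_{n∈ℤ} |(2π)^{-1/2}∫_{-a}^{a} g(ξ) e^{iλ_nξ} dξ|² ≤ B ∫_{-a}^{a}|g(ξ)|²|ξ|^{2s}dξ. (That is, the fractional Paley–Wiener space PW^s_a admits no real sampling sequence; in particular PW^s_a is not a de Branges space.) -/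
open MeasureTheory Complex Filter Topology

noncomputable section

namespace Stmt15Aux

/-- The value of `∫_{-r}^r e^{iμξ} dξ`. -/
def Sval (r μ : ℝ) : ℝ := if μ = 0 then 2 * r else 2 * Real.sin (r * μ) / μ

lemma sin_lower {x : ℝ} (h0 : 0 ≤ x) (h1 : x ≤ 1) : 3 / 4 * x ≤ Real.sin x := by
  rcases eq_or_lt_of_le h0 with h | h
  · simp [← h]
  · have h2 := Real.sin_gt_sub_cube h
    have hx2 : x ^ 2 ≤ 1 := by nlinarith
    have h3 : x ^ 3 ≤ x := by nlinarith
    linarith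

lemma Sval_lower {r μ : ℝ} (hr : 0 < r) (h : r * |μ| ≤ 1) : 3 / 2 * r ≤ |Sval r μ| := by
  rcases eq_or_ne μ 0 with hμ | hμ
  · rw [Sval, if_pos hμ, _root_.abs_of_pos (by linarith)]; linarith
  · have hμ' : 0 < |μ| := abs_pos.mpr hμ
    have key : Sval r μ = 2 * Real.sin (r * |μ|) / |μ| := by
      rw [Sval, if_neg hμ]
      rcases lt_or_gt_of_ne hμ with hneg | hpos
      · rw [abs_of_neg hneg, show r * -μ = -(r * μ) by ring, Real.sin_neg]
        rw [div_eq_div_iff hμ (neg_ne_zero.mpr hμ)]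
        ring
      · rw [abs_of_pos hpos]
    have hs : 3 / 4 * (r * |μ|) ≤ Real.sin (r * |μ|) := sin_lower (by positivity) h
    have h2 : 3 / 2 * r ≤ 2 * Real.sin (r * |μ|) / |μ| := by
      rw [le_div_iff₀ hμ']
      nlinarith
    rw [key, _root_.abs_of_nonneg (le_trans (by positivity) h2)]
    exact h2

lemma Sval_upper {r μ : ℝ} (hμ : μ ≠ 0) : |Sval r μ| ≤ 2 / |μ| := by
  rw [Sval, if_neg hμ, abs_div]
  refine (div_le_div_iff_of_pos_right (abs_pos.mpr hμ)).mpr ?_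
  have habs : |Real.sin (r * μ)| ≤ 1 :=
    abs_le.mpr ⟨Real.neg_one_le_sin _, Real.sin_le_one _⟩
  rw [abs_mul, show |(2:ℝ)| = 2 by norm_num]
  linarith

lemma exp_int {r : ℝ} (hr : 0 < r) (μ : ℝ) :
    ∫ ξ in Set.Icc (-r) r, Complex.exp (Complex.I * μ * ξ) = ((Sval r μ : ℝ) : ℂ) := by
  rcases eq_or_ne μ 0 with hμ | hμ
  · subst hμ
    simp only [Complex.ofReal_zero, mul_zero, zero_mul, Complex.exp_zero]
    rw [setIntegral_const, Real.volume_real_Icc_of_le (by linarith),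
      Complex.real_smul, Sval, if_pos rfl]
    push_cast
    ring
  · have hc : Complex.I * (μ : ℂ) ≠ 0 :=
      mul_ne_zero Complex.I_ne_zero (by exact_mod_cast hμ)
    have h1 : ∫ ξ in Set.Icc (-r) r, Complex.exp (Complex.I * μ * ξ)
        = ∫ ξ in (-r)..r, Complex.exp (Complex.I * (μ : ℂ) * ξ) := by
      rw [intervalIntegral.integral_of_le (by linarith : -r ≤ r),
        MeasureTheory.integral_Icc_eq_integral_Ioc]
    rw [h1]
    rw [show (fun ξ : ℝ => Complex.exp (Complex.I * (μ:ℂ) * ξ)) =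
        fun ξ : ℝ => Complex.exp ((Complex.I * μ) * ξ) from funext fun ξ => by ring_nf]
    rw [integral_exp_mul_complex hc]
    rw [Sval, if_neg hμ]
    have e1 : Complex.I * (μ:ℂ) * (r:ℂ) = ((μ * r : ℝ) : ℂ) * Complex.I := by push_cast; ring
    have e2 : Complex.I * (μ:ℂ) * ((-r : ℝ):ℂ) = ((-(μ * r) : ℝ) : ℂ) * Complex.I := by
      push_cast; ring
    rw [e1, e2, Complex.exp_mul_I, Complex.exp_mul_I]
    rw [div_eq_iff hc]
    have hμc : (μ : ℂ) ≠ 0 := by exact_mod_cast hμ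
    push_cast
    rw [mul_comm ((μ:ℂ)) ((r:ℂ))]
    field_simp
    rw [Complex.cos_neg, Complex.sin_neg]
    ring

/-- The test functions: modulated indicators. -/
def gg (r t : ℝ) : ℝ → ℂ :=
  Set.indicator (Set.Icc (-r) r) (fun ξ : ℝ => Complex.exp (Complex.I * t * ξ))

lemma gg_meas (r t : ℝ) : Measurable (gg r t) := by
  apply Measurable.indicator ?_ measurableSet_Icc
  fun_prop

lemma gg_norm_sq (r t s' : ℝ) : (fun ξ : ℝ => ‖gg r t ξ‖ ^ 2 * |ξ| ^ s')
    = Set.indicator (Set.Icc (-r) r) (fun ξ : ℝ => |ξ| ^ s') := by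
  funext ξ
  by_cases hξ : ξ ∈ Set.Icc (-r) r
  · rw [gg, Set.indicator_of_mem hξ, Set.indicator_of_mem hξ,
      show Complex.I * (t:ℂ) * (ξ:ℂ) = ((t * ξ : ℝ):ℂ) * Complex.I by push_cast; ring,
      Complex.norm_exp_ofReal_mul_I]
    norm_num
  · rw [gg, Set.indicator_of_notMem hξ, Set.indicator_of_notMem hξ]
    simp

lemma abs_rpow_cont {s' : ℝ} (hs' : 0 < s') : Continuous (fun ξ : ℝ => |ξ| ^ s') :=
  continuous_abs.rpow_const (fun _ => Or.inr hs'.le)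

lemma gg_weight_integrable (r t : ℝ) {s' : ℝ} (hs' : 0 < s') :
    Integrable (fun ξ : ℝ => ‖gg r t ξ‖ ^ 2 * |ξ| ^ s') := by
  rw [gg_norm_sq]
  exact (integrable_indicator_iff measurableSet_Icc).mpr
    ((abs_rpow_cont hs').integrableOn_Icc)

lemma gg_weight_upper {r : ℝ} (t : ℝ) {s' : ℝ} (hr : 0 < r) (hs' : 0 < s') :
    ∫ ξ : ℝ, ‖gg r t ξ‖ ^ 2 * |ξ| ^ s' ≤ 2 * r * r ^ s' := by
  rw [gg_norm_sq, integral_indicator measurableSet_Icc]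
  have h1 : ∫ ξ in Set.Icc (-r) r, |ξ| ^ s' ≤ ∫ _ in Set.Icc (-r) r, r ^ s' := by
    apply setIntegral_mono_on ((abs_rpow_cont hs').integrableOn_Icc)
      ((integrableOn_const_iff).mpr (Or.inr (by rw [Real.volume_Icc]; exact ENNReal.ofReal_lt_top)))
      measurableSet_Icc
    intro ξ hξ
    apply Real.rpow_le_rpow (abs_nonneg _) _ hs'.le
    rw [abs_le]
    exact ⟨hξ.1, hξ.2⟩
  calc ∫ ξ in Set.Icc (-r) r, |ξ| ^ s' ≤ ∫ _ in Set.Icc (-r) r, r ^ s' := h1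
    _ = 2 * r * r ^ s' := by
        rw [setIntegral_const, Real.volume_real_Icc_of_le (by linarith),
          smul_eq_mul]
        ring

lemma gg_weight_lower {r : ℝ} (t : ℝ) {s' : ℝ} (hr : 0 < r) (hs' : 0 < s') :
    (r / 2) ^ (1 + s') ≤ ∫ ξ : ℝ, ‖gg r t ξ‖ ^ 2 * |ξ| ^ s' := by
  rw [gg_norm_sq, integral_indicator measurableSet_Icc]
  have h0 : ∫ _ in Set.Icc (r/2) r, (r/2) ^ s' ≤ ∫ ξ in Set.Icc (r/2) r, |ξ| ^ s' := by
    apply setIntegral_mono_on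
      ((integrableOn_const_iff).mpr (Or.inr (by rw [Real.volume_Icc]; exact ENNReal.ofReal_lt_top)))
      ((abs_rpow_cont hs').integrableOn_Icc) measurableSet_Icc
    intro ξ hξ
    apply Real.rpow_le_rpow (by positivity) _ hs'.le
    rw [le_abs]
    left; exact hξ.1
  have h1 : ∫ ξ in Set.Icc (r/2) r, |ξ| ^ s' ≤ ∫ ξ in Set.Icc (-r) r, |ξ| ^ s' := by
    apply setIntegral_mono_set ((abs_rpow_cont hs').integrableOn_Icc)
      (Filter.Eventually.of_forall (fun ξ => by positivity))
    exact HasSubset.Subset.eventuallyLE (Set.Icc_subset_Icc (by linarith) le_rfl)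
  have h2 : ∫ _ in Set.Icc (r/2) r, (r/2) ^ s' = (r/2) ^ (1 + s') := by
    rw [setIntegral_const, Real.volume_real_Icc_of_le (by linarith), smul_eq_mul,
      Real.rpow_add (by positivity), Real.rpow_one]
    ring
  linarith

lemma gg_sample {r a : ℝ} (hr : 0 < r) (hra : r ≤ a) (t lam : ℝ) :
    ∫ ξ in Set.Icc (-a) a, gg r t ξ * Complex.exp (Complex.I * lam * ξ)
      = ((Sval r (lam + t) : ℝ) : ℂ) := by
  have key : (fun ξ : ℝ => gg r t ξ * Complex.exp (Complex.I * lam * ξ))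
      = Set.indicator (Set.Icc (-r) r)
        (fun ξ : ℝ => Complex.exp (Complex.I * ((lam + t : ℝ) : ℂ) * ξ)) := by
    funext ξ
    by_cases hξ : ξ ∈ Set.Icc (-r) r
    · rw [gg, Set.indicator_of_mem hξ, Set.indicator_of_mem hξ, ← Complex.exp_add]
      congr 1
      push_cast
      ring
    · rw [gg, Set.indicator_of_notMem hξ, Set.indicator_of_notMem hξ, zero_mul]
  rw [key, setIntegral_indicator measurableSet_Icc,
    Set.inter_eq_self_of_subset_right (Set.Icc_subset_Icc (by linarith) hra),
    exp_int hr]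

lemma nat_abs_ge {j j' : ℕ} (h : j ≠ j') : (1:ℝ) ≤ |(j:ℝ) - (j':ℝ)| := by
  have h1 : (j:ℤ) ≠ (j':ℤ) := by exact_mod_cast h
  have h2 : (1:ℤ) ≤ |(j:ℤ) - (j':ℤ)| := Int.one_le_abs (sub_ne_zero.mpr h1)
  exact_mod_cast h2

end Stmt15Aux

open Stmt15Aux

set_option maxHeartbeats 1000000 in
theorem stmt15 (a s : ℝ) (ha : 0 < a) (hs0 : 0 < s) (hs : s < 1 / 2) :
    ¬ ∃ (lam : ℤ → ℝ) (A B : ℝ), 0 < A ∧ 0 < B ∧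
      ∀ g : ℝ → ℂ, Measurable g → (∀ ξ : ℝ, ξ ∉ Set.Icc (-a) a → g ξ = 0) →
        Integrable (fun ξ : ℝ => ‖g ξ‖ ^ 2 * |ξ| ^ (2 * s)) →
        A * (∫ ξ : ℝ, ‖g ξ‖ ^ 2 * |ξ| ^ (2 * s)) ≤
          (∑' n : ℤ, ‖(((2 * Real.pi) ^ (-(1 / 2) : ℝ) : ℝ) : ℂ) *
            ∫ ξ in Set.Icc (-a) a, g ξ * Complex.exp (Complex.I * lam n * ξ)‖ ^ 2) ∧
        (∑' n : ℤ, ‖(((2 * Real.pi) ^ (-(1 / 2) : ℝ) : ℝ) : ℂ) *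
            ∫ ξ in Set.Icc (-a) a, g ξ * Complex.exp (Complex.I * lam n * ξ)‖ ^ 2) ≤
          B * ∫ ξ : ℝ, ‖g ξ‖ ^ 2 * |ξ| ^ (2 * s) := by
  rintro ⟨lam, A, B, hA, hB, H⟩
  set c0 : ℝ := ((2 * Real.pi) ^ (-(1 / 2) : ℝ) : ℝ) with hc0def
  have hc0 : 0 < c0 := Real.rpow_pos_of_pos (by positivity) _
  have hc0sq : 0 < c0 ^ 2 := by positivity
  have hs2 : 0 < 2 * s := by linarith
  have hs2' : 2 * s < 1 := by linarith
  set b : ℝ := min a 1 with hbdef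
  have hb : 0 < b := lt_min ha one_pos
  have hba : b ≤ a := min_le_left _ _
  -- Instantiation of the sampling inequalities on modulated indicator functions.
  have hKey : ∀ r t : ℝ, 0 < r → r ≤ a →
      Summable (fun n : ℤ => c0 ^ 2 * (Sval r (lam n + t)) ^ 2) ∧
      A * ((r/2) ^ (1 + 2*s)) ≤ (∑' n : ℤ, c0 ^ 2 * (Sval r (lam n + t)) ^ 2) ∧
      (∑' n : ℤ, c0 ^ 2 * (Sval r (lam n + t)) ^ 2) ≤ B * (2 * r * r ^ (2*s)) := by
    intro r t hr hra
    have hsub : Set.Icc (-r) r ⊆ Set.Icc (-a) a := Set.Icc_subset_Icc (by linarith) hra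
    obtain ⟨h1, h2⟩ := H (gg r t) (gg_meas r t)
      (fun ξ hξ => Set.indicator_of_notMem (fun hmem => hξ (hsub hmem)) _)
      (gg_weight_integrable r t hs2)
    have hterm : ∀ n : ℤ, ‖((c0 : ℝ) : ℂ) *
        ∫ ξ in Set.Icc (-a) a, gg r t ξ * Complex.exp (Complex.I * lam n * ξ)‖ ^ 2
        = c0 ^ 2 * (Sval r (lam n + t)) ^ 2 := by
      intro n
      rw [gg_sample hr hra t (lam n), norm_mul, Complex.norm_real, Complex.norm_real,
        Real.norm_eq_abs, Real.norm_eq_abs, _root_.abs_of_pos hc0, mul_pow, _root_.sq_abs]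
    rw [tsum_congr hterm] at h1 h2
    have hWlow := gg_weight_lower (r := r) t (s' := 2*s) hr hs2
    have hWup := gg_weight_upper (r := r) t (s' := 2*s) hr hs2
    have hlow : A * ((r/2) ^ (1 + 2*s)) ≤ ∑' n : ℤ, c0 ^ 2 * (Sval r (lam n + t)) ^ 2 :=
      le_trans (by nlinarith [Real.rpow_pos_of_pos (show (0:ℝ) < r/2 by linarith) (1 + 2*s)]) h1
    refine ⟨?_, hlow, le_trans h2 (by nlinarith)⟩
    by_contra hns
    rw [tsum_eq_zero_of_not_summable hns] at hlow
    nlinarith [Real.rpow_pos_of_pos (show (0:ℝ) < r/2 by linarith) (1 + 2*s)]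
  -- Counting estimate.
  have hcount : ∀ (t ρ : ℝ), 1/b ≤ ρ → ∀ F : Finset ℤ, (∀ n ∈ F, |lam n + t| ≤ ρ) →
      (F.card : ℝ) ≤ B / c0 ^ 2 * ρ ^ (1 - 2*s) := by
    intro t ρ hρb F hF
    have hρ : 0 < ρ := lt_of_lt_of_le (by positivity) hρb
    set r : ℝ := ρ⁻¹ with hrdef
    have hr : 0 < r := by positivity
    have hra : r ≤ a := by
      have hrb : r ≤ b := by
        rw [hrdef, inv_le_comm₀ hρ hb, ← one_div]
        exact hρb
      linarith
    obtain ⟨hsum, hlow, hupp⟩ := hKey r t hr hra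
    have hterm_low : ∀ n ∈ F, c0 ^ 2 * (3/2 * r) ^ 2 ≤ c0 ^ 2 * (Sval r (lam n + t)) ^ 2 := by
      intro n hn
      have habs : r * |lam n + t| ≤ 1 := by
        have := hF n hn
        calc r * |lam n + t| ≤ r * ρ := by nlinarith [abs_nonneg (lam n + t)]
          _ = 1 := by rw [hrdef]; exact inv_mul_cancel₀ hρ.ne'
      have := Sval_lower hr habs
      have h2 : (3/2 * r) ^ 2 ≤ (Sval r (lam n + t)) ^ 2 := by
        rw [← _root_.sq_abs (Sval r (lam n + t))]
        exact pow_le_pow_left₀ (by positivity) this 2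
      nlinarith
    have hsum_ge : (F.card : ℝ) * (c0 ^ 2 * (3/2 * r) ^ 2)
        ≤ ∑ n ∈ F, c0 ^ 2 * (Sval r (lam n + t)) ^ 2 := by
      calc (F.card : ℝ) * (c0 ^ 2 * (3/2 * r) ^ 2)
          = ∑ _n ∈ F, c0 ^ 2 * (3/2 * r) ^ 2 := by rw [Finset.sum_const, nsmul_eq_mul]
        _ ≤ _ := Finset.sum_le_sum hterm_low
    have hchain : (F.card : ℝ) * (c0 ^ 2 * (3/2 * r) ^ 2) ≤ B * (2 * r * r ^ (2*s)) :=
      le_trans hsum_ge (le_trans (Summable.sum_le_tsum F (fun n _ => by positivity) hsum) hupp)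
    set v : ℝ := r ^ (2*s) with hvdef
    have hv : 0 < v := Real.rpow_pos_of_pos hr _
    have hρpow : ρ ^ (1 - 2*s) = r⁻¹ * v := by
      rw [show (1 : ℝ) - 2*s = 1 + -(2*s) by ring, Real.rpow_add hρ, Real.rpow_one,
        Real.rpow_neg hρ.le, hvdef, hrdef, Real.inv_rpow hρ.le, inv_inv]
    rw [hρpow]
    have hcard0 : (0:ℝ) ≤ (F.card : ℝ) := Nat.cast_nonneg _
    have key2 : (F.card : ℝ) * (c0 ^ 2 * r) ≤ B * v := by
      have h5 : ((F.card:ℝ) * (c0 ^ 2 * r)) * r ≤ (B * v) * r := by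
        nlinarith [mul_pos (mul_pos hB hv) hr]
      exact le_of_mul_le_mul_right h5 hr
    have h3 : (F.card:ℝ) ≤ B * v / (c0 ^ 2 * r) := (le_div_iff₀ (by positivity)).mpr key2
    have h4 : B * v / (c0 ^ 2 * r) = B / c0 ^ 2 * (r⁻¹ * v) := by
      rw [div_eq_mul_inv, div_eq_mul_inv, mul_inv]
      ring
    linarith
  -- Gap lemma: there are arbitrarily large intervals free of the points lam n.
  have hgap : ∀ G : ℝ, 1/b ≤ G → 1 ≤ G → ∃ γ : ℝ, ∀ n : ℤ, G < |lam n - γ| := by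
    intro G hGb hG1
    by_contra hno
    push_neg at hno
    have hG0 : (0:ℝ) < G := by linarith
    have hC2 : 0 < B / c0 ^ 2 := by positivity
    set D : ℝ := max 1 (B / c0 ^ 2 * (3*G+1) ^ (1 - 2*s)) with hDdef
    have hD1 : (1:ℝ) ≤ D := le_max_left _ _
    have hD0 : (0:ℝ) < D := by linarith
    set M : ℕ := ⌈D ^ ((1:ℝ)/(2*s))⌉₊ + 1 with hMdef
    have hM1 : 1 ≤ M := by omega
    have hM0 : (0:ℝ) < (M:ℝ) := by exact_mod_cast Nat.pos_of_ne_zero (by omega)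
    have hMgt : D ^ ((1:ℝ)/(2*s)) < (M:ℝ) := by
      have h1 := Nat.le_ceil (D ^ ((1:ℝ)/(2*s)))
      have h2 : ((⌈D ^ ((1:ℝ)/(2*s))⌉₊ : ℝ)) + 1 = (M:ℝ) := by rw [hMdef]; push_cast; ring
      linarith
    have hMD : D < (M:ℝ) ^ (2*s) := by
      have h0 : (0:ℝ) ≤ D ^ ((1:ℝ)/(2*s)) := (Real.rpow_pos_of_pos hD0 _).le
      have h1 : (D ^ ((1:ℝ)/(2*s))) ^ (2*s) < (M:ℝ) ^ (2*s) :=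
        Real.rpow_lt_rpow h0 hMgt hs2
      rwa [← Real.rpow_mul hD0.le, one_div,
        inv_mul_cancel₀ (show (2*s) ≠ 0 by positivity), Real.rpow_one] at h1
    have hpick : ∀ j : ℕ, ∃ n : ℤ, |lam n - (2*G+1)*j| ≤ G := fun j => hno ((2*G+1)*j)
    choose nf hnf using hpick
    have hinj : Set.InjOn nf (Finset.range M) := by
      intro j hj j' hj' hEq
      by_contra hne
      have h1 := hnf j
      have h2 := hnf j'
      rw [hEq] at h1
      have h3 : |(2*G+1)*(j:ℝ) - (2*G+1)*(j':ℝ)|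
          ≤ |(2*G+1)*(j:ℝ) - lam (nf j')| + |lam (nf j') - (2*G+1)*(j':ℝ)| :=
        abs_sub_le _ _ _
      rw [abs_sub_comm ((2*G+1)*(j:ℝ)) (lam (nf j'))] at h3
      have h4 : (1:ℝ) ≤ |(j:ℝ) - (j':ℝ)| := nat_abs_ge hne
      have h5 : |(2*G+1)*(j:ℝ) - (2*G+1)*(j':ℝ)| = (2*G+1) * |(j:ℝ) - (j':ℝ)| := by
        rw [← mul_sub, abs_mul, _root_.abs_of_pos (by linarith : (0:ℝ) < 2*G+1)]
      nlinarith
    set F : Finset ℤ := (Finset.range M).image nf with hFdef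
    have hcard : (F.card : ℝ) = (M:ℝ) := by
      rw [hFdef, Finset.card_image_of_injOn hinj, Finset.card_range]
    have hmem : ∀ n ∈ F, |lam n + 0| ≤ (2*G+1)*M := by
      intro n hn
      rw [hFdef] at hn
      obtain ⟨j, hj, rfl⟩ := Finset.mem_image.mp hn
      have hjM : (j:ℝ) + 1 ≤ (M:ℝ) := by
        have := Finset.mem_range.mp hj
        exact_mod_cast Nat.succ_le_of_lt this
      have h1 := hnf j
      rw [add_zero]
      have h2 : |lam (nf j)| ≤ |lam (nf j) - (2*G+1)*j| + |(2*G+1)*(j:ℝ)| := by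
        calc |lam (nf j)| = |(lam (nf j) - (2*G+1)*(j:ℝ)) + (2*G+1)*(j:ℝ)| := by ring_nf
          _ ≤ _ := abs_add_le _ _
      have h3 : |(2*G+1)*(j:ℝ)| = (2*G+1)*(j:ℝ) := _root_.abs_of_nonneg (by positivity)
      nlinarith
    have hM1R : (1:ℝ) ≤ (M:ℝ) := by exact_mod_cast hM1
    have hMle := hcount 0 ((2*G+1)*M) (by nlinarith [hGb, hG0, hM1R]) F hmem
    rw [hcard] at hMle
    have e1 : ((2*G+1)*(M:ℝ)) ^ (1-2*s) ≤ ((3*G+1)*(M:ℝ)) ^ (1-2*s) :=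
      Real.rpow_le_rpow (by positivity) (by nlinarith) (by linarith)
    have e2 : ((3*G+1)*(M:ℝ)) ^ (1-2*s) = (3*G+1) ^ (1-2*s) * (M:ℝ) ^ (1-2*s) :=
      Real.mul_rpow (by positivity) (by positivity)
    have e3 : (M:ℝ) ^ (2*s) * (M:ℝ) ^ (1-2*s) = (M:ℝ) := by
      rw [← Real.rpow_add hM0]
      norm_num
    have hMpow : 0 < (M:ℝ) ^ (1-2*s) := Real.rpow_pos_of_pos hM0 _
    have hDle : B / c0 ^ 2 * (3*G+1) ^ (1-2*s) ≤ D := le_max_right _ _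
    have f1 : B / c0 ^ 2 * (((2*G+1)*(M:ℝ)) ^ (1-2*s))
        ≤ (B / c0 ^ 2 * (3*G+1) ^ (1-2*s)) * ((M:ℝ) ^ (1-2*s)) := by
      calc B / c0 ^ 2 * (((2*G+1)*(M:ℝ)) ^ (1-2*s))
          ≤ B / c0 ^ 2 * (((3*G+1)*(M:ℝ)) ^ (1-2*s)) :=
            mul_le_mul_of_nonneg_left e1 hC2.le
        _ = _ := by rw [e2]; ring
    have f3 : (B / c0 ^ 2 * (3*G+1) ^ (1-2*s)) * ((M:ℝ) ^ (1-2*s))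
        ≤ D * ((M:ℝ) ^ (1-2*s)) := mul_le_mul_of_nonneg_right hDle hMpow.le
    have f4 : D * ((M:ℝ) ^ (1-2*s)) < (M:ℝ) ^ (2*s) * ((M:ℝ) ^ (1-2*s)) :=
      mul_lt_mul_of_pos_right hMD hMpow
    linarith
  -- Choice of the gap size and conclusion.
  set P : ℝ := A * (b/2) ^ (1 + 2*s) with hPdef
  have hP : 0 < P := mul_pos hA (Real.rpow_pos_of_pos (by positivity) _)
  set G : ℝ := max (max 1 (1/b)) (16*B/P + 1) with hGdef
  have hG1 : (1:ℝ) ≤ G := le_trans (le_max_left _ _) (le_max_left _ _)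
  have hGb : 1/b ≤ G := le_trans (le_max_right 1 (1/b)) (le_max_left _ _)
  have hGP : 16*B/P + 1 ≤ G := le_max_right _ _
  have hG0 : (0:ℝ) < G := by linarith
  obtain ⟨γ, hγ⟩ := hgap G hGb hG1
  obtain ⟨hsum, hlow, hupp⟩ := hKey b (-γ) hb hba
  have hxG : ∀ n : ℤ, G < |lam n + -γ| := fun n => by
    rw [← sub_eq_add_neg]; exact hγ n
  have hx0 : ∀ n : ℤ, 0 < |lam n + -γ| := fun n => lt_trans hG0 (hxG n)
  set φ : ℤ → ℕ := fun n => ⌊Real.logb 2 (|lam n + -γ| / G)⌋₊ with hφdef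
  have hφlow : ∀ n : ℤ, (2:ℝ) ^ (φ n) * G ≤ |lam n + -γ| := by
    intro n
    have h1 : (1:ℝ) ≤ |lam n + -γ| / G := (one_le_div hG0).mpr (hxG n).le
    have hlog0 : 0 ≤ Real.logb 2 (|lam n + -γ| / G) := Real.logb_nonneg one_lt_two h1
    have h2 : ((φ n : ℝ)) ≤ Real.logb 2 (|lam n + -γ| / G) := Nat.floor_le hlog0
    have h3 : (2:ℝ) ^ ((φ n : ℝ)) ≤ (2:ℝ) ^ Real.logb 2 (|lam n + -γ| / G) :=
      Real.rpow_le_rpow_of_exponent_le one_le_two h2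
    rw [Real.rpow_logb (by norm_num) (by norm_num) (by positivity)] at h3
    rw [Real.rpow_natCast] at h3
    calc (2:ℝ) ^ (φ n) * G ≤ (|lam n + -γ| / G) * G := mul_le_mul_of_nonneg_right h3 hG0.le
      _ = |lam n + -γ| := by field_simp
  have hφhigh : ∀ n : ℤ, |lam n + -γ| ≤ (2:ℝ) ^ (φ n + 1) * G := by
    intro n
    have h2 : Real.logb 2 (|lam n + -γ| / G) < (φ n : ℝ) + 1 := Nat.lt_floor_add_one _
    have h3 : |lam n + -γ| / G < (2:ℝ) ^ ((φ n : ℝ) + 1) := by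
      conv_lhs => rw [← Real.rpow_logb (show (0:ℝ) < 2 by norm_num) (by norm_num)
        (div_pos (hx0 n) hG0)]
      exact Real.rpow_lt_rpow_of_exponent_lt one_lt_two h2
    have h4 : (2:ℝ) ^ ((φ n : ℝ) + 1) = (2:ℝ) ^ (φ n + 1) := by
      rw [show ((φ n : ℝ) + 1) = ((φ n + 1 : ℕ) : ℝ) by push_cast; ring, Real.rpow_natCast]
    rw [h4] at h3
    calc |lam n + -γ| = (|lam n + -γ| / G) * G := by field_simp
      _ ≤ (2:ℝ) ^ (φ n + 1) * G := mul_le_mul_of_nonneg_right h3.le hG0.le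
  have htermb : ∀ n : ℤ, c0 ^ 2 * (Sval b (lam n + -γ)) ^ 2
      ≤ (4 * c0 ^ 2 / G ^ 2) * (1/4 : ℝ) ^ (φ n) := by
    intro n
    have hx : 0 < |lam n + -γ| := hx0 n
    have hne : lam n + -γ ≠ 0 := by
      intro h0
      rw [h0] at hx
      simp at hx
    have hupper : |Sval b (lam n + -γ)| ≤ 2 / |lam n + -γ| := Sval_upper hne
    have h1 : (Sval b (lam n + -γ)) ^ 2 ≤ (2 / |lam n + -γ|) ^ 2 := by
      rw [← _root_.sq_abs (Sval b (lam n + -γ))]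
      exact pow_le_pow_left₀ (abs_nonneg _) hupper 2
    have hlow2 : (2:ℝ) ^ (φ n) * G ≤ |lam n + -γ| := hφlow n
    have h2 : (2 / |lam n + -γ|) ^ 2 ≤ (2 / ((2:ℝ) ^ (φ n) * G)) ^ 2 := by
      apply pow_le_pow_left₀ (by positivity)
      gcongr
    have h4k : ((2:ℝ) ^ (φ n)) ^ 2 = 4 ^ (φ n) := by
      rw [← pow_mul, mul_comm, pow_mul]
      norm_num
    have e14' : ((1:ℝ)/4) ^ (φ n) = ((4:ℝ) ^ (φ n))⁻¹ := by rw [one_div, inv_pow]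
    have h44 : (0:ℝ) < (4:ℝ) ^ (φ n) := by positivity
    have h3 : (2 / ((2:ℝ) ^ (φ n) * G)) ^ 2 = (4 / G ^ 2) * (1/4:ℝ) ^ (φ n) := by
      rw [div_pow, mul_pow, h4k, e14']
      rw [show ((2:ℝ) ^ 2 : ℝ) = 4 by norm_num]
      field_simp
    calc c0 ^ 2 * (Sval b (lam n + -γ)) ^ 2
        ≤ c0 ^ 2 * ((4 / G ^ 2) * (1/4:ℝ) ^ (φ n)) := by nlinarith [h1, h2, h3, hc0sq]
      _ = (4 * c0 ^ 2 / G ^ 2) * (1/4 : ℝ) ^ (φ n) := by ring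
  have hFbound : ∀ F : Finset ℤ,
      ∑ n ∈ F, c0 ^ 2 * (Sval b (lam n + -γ)) ^ 2 ≤ 16 * B / G := by
    intro F
    classical
    rw [← Finset.sum_fiberwise_of_maps_to
      (fun n (hn : n ∈ F) => Finset.mem_image_of_mem φ hn)
      (fun n => c0 ^ 2 * (Sval b (lam n + -γ)) ^ 2)]
    have hinner : ∀ k ∈ F.image φ,
        ∑ n ∈ F.filter (fun n => φ n = k), c0 ^ 2 * (Sval b (lam n + -γ)) ^ 2
          ≤ (8 * B / G) * (1/2:ℝ) ^ k := by
      intro k _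
      have hbnd : ∀ n ∈ F.filter (fun n => φ n = k),
          c0 ^ 2 * (Sval b (lam n + -γ)) ^ 2 ≤ (4 * c0 ^ 2 / G ^ 2) * (1/4:ℝ) ^ k := by
        intro n hn
        have hφn : φ n = k := (Finset.mem_filter.mp hn).2
        rw [← hφn]
        exact htermb n
      have h1 := Finset.sum_le_card_nsmul _ _ _ hbnd
      rw [nsmul_eq_mul] at h1
      have hcard2 : (((F.filter (fun n => φ n = k)).card : ℝ))
          ≤ (B / c0 ^ 2) * ((2:ℝ) ^ (k+1) * G) := by
        have hρ1 : (1:ℝ) ≤ (2:ℝ) ^ (k+1) := by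
          simpa using pow_le_pow_left₀ (by norm_num : (0:ℝ) ≤ 1) (by norm_num : (1:ℝ) ≤ 2) (k+1)
        have hρb : 1/b ≤ (2:ℝ) ^ (k+1) * G := by nlinarith
        have hmem2 : ∀ n ∈ F.filter (fun n => φ n = k), |lam n + -γ| ≤ (2:ℝ) ^ (k+1) * G := by
          intro n hn
          have hφn : φ n = k := (Finset.mem_filter.mp hn).2
          have := hφhigh n
          rwa [hφn] at this
        have hc := hcount (-γ) ((2:ℝ) ^ (k+1) * G) hρb (F.filter (fun n => φ n = k)) hmem2
        have hcoarse : ((2:ℝ) ^ (k+1) * G) ^ (1 - 2*s) ≤ (2:ℝ) ^ (k+1) * G := by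
          calc ((2:ℝ) ^ (k+1) * G) ^ (1 - 2*s)
              ≤ ((2:ℝ) ^ (k+1) * G) ^ (1:ℝ) :=
                Real.rpow_le_rpow_of_exponent_le (by nlinarith) (by linarith)
            _ = (2:ℝ) ^ (k+1) * G := Real.rpow_one _
        calc (((F.filter (fun n => φ n = k)).card : ℝ))
            ≤ B / c0 ^ 2 * (((2:ℝ) ^ (k+1) * G) ^ (1 - 2*s)) := hc
          _ ≤ (B / c0 ^ 2) * ((2:ℝ) ^ (k+1) * G) :=
              mul_le_mul_of_nonneg_left hcoarse (by positivity)
      have hq : (0:ℝ) < (2:ℝ) ^ k := by positivity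
      have e14 : ((1:ℝ)/4) ^ k = (((2:ℝ) ^ k) ^ 2)⁻¹ := by
        rw [show (((2:ℝ) ^ k) ^ 2) = 4 ^ k by rw [← pow_mul, mul_comm, pow_mul]; norm_num,
          one_div, inv_pow]
      have e12 : ((1:ℝ)/2) ^ k = ((2:ℝ) ^ k)⁻¹ := by rw [one_div, inv_pow]
      have heq : ((B / c0 ^ 2) * ((2:ℝ) ^ (k+1) * G)) * ((4 * c0 ^ 2 / G ^ 2) * (1/4:ℝ) ^ k)
          = (8 * B / G) * (1/2:ℝ) ^ k := by
        rw [e14, e12, pow_succ]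
        field_simp
        ring
      calc ∑ n ∈ F.filter (fun n => φ n = k), c0 ^ 2 * (Sval b (lam n + -γ)) ^ 2
          ≤ (((F.filter (fun n => φ n = k)).card : ℝ)) * ((4 * c0 ^ 2 / G ^ 2) * (1/4:ℝ) ^ k) := h1
        _ ≤ ((B / c0 ^ 2) * ((2:ℝ) ^ (k+1) * G)) * ((4 * c0 ^ 2 / G ^ 2) * (1/4:ℝ) ^ k) :=
            mul_le_mul_of_nonneg_right hcard2 (by positivity)
        _ = (8 * B / G) * (1/2:ℝ) ^ k := heq
    calc ∑ k ∈ F.image φ, ∑ n ∈ F.filter (fun n => φ n = k), c0 ^ 2 * (Sval b (lam n + -γ)) ^ 2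
        ≤ ∑ k ∈ F.image φ, (8 * B / G) * (1/2:ℝ) ^ k := Finset.sum_le_sum hinner
      _ = (8 * B / G) * ∑ k ∈ F.image φ, (1/2:ℝ) ^ k := by rw [← Finset.mul_sum]
      _ ≤ (8 * B / G) * 2 := by
          apply mul_le_mul_of_nonneg_left ?_ (by positivity)
          have hsumgeo : ∑ k ∈ F.image φ, (1/2:ℝ) ^ k ≤ ∑' k : ℕ, (1/2:ℝ) ^ k :=
            Summable.sum_le_tsum _ (fun k _ => by positivity)
              (summable_geometric_of_lt_one (by norm_num) (by norm_num))
          rw [tsum_geometric_of_lt_one (by norm_num) (by norm_num)] at hsumgeo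
          norm_num at hsumgeo
          exact hsumgeo
      _ = 16 * B / G := by ring
  have hT : (∑' n : ℤ, c0 ^ 2 * (Sval b (lam n + -γ)) ^ 2) ≤ 16 * B / G :=
    Summable.tsum_le_of_sum_le hsum hFbound
  have hfinal : 16 * B / G < P := by
    rw [div_lt_iff₀ hG0]
    have h1 : P * (16*B/P + 1) ≤ P * G := mul_le_mul_of_nonneg_left hGP hP.le
    have h2 : P * (16*B/P) = 16*B := by field_simp
    nlinarith
  have hPeq : P = A * ((b/2) ^ (1 + 2*s)) := hPdef
  linarith [hlow, hT, hfinal]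
end
end
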